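/- Let n, N, K be positive integers. Let z_1, …, z_K ∈ ℂ^n \ {0} be a frame for ℂ^n with lower frame bound A_K and upper frame bound B_K, let y_1, …, y_N ∈ ℂ^n \ {0}, and suppose there exists j₀ ∈ {1, …, N} such that m_y := min_{1 ≤ i ≤ n} |y_{j₀}(i)| > 0. Define x_{j,k} := y_j ⊙ z_k for 1 ≤ j ≤ N, 1 ≤ k ≤ K. Then for every x ∈ ℂ^n, m_y²·A_K·‖x‖² ≤ Σ_{j=1}^N Σ_{k=1}^K |⟨x, x_{j,k}⟩|² ≤ N·B_K·(max_{1 ≤ j ≤ N} ‖y_j‖_∞²)·‖x‖². In particular, X = {x_{j,k} : 1 ≤ j ≤ N, 1 ≤ k ≤ K} is a multiplicative frame for ℂ^n. -/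

import Mathlib

lemma euc_norm_sq (n : ℕ) (x : EuclideanSpace ℂ (Fin n)) :
    ‖x‖ ^ 2 = ∑ i, ‖x i‖ ^ 2 := by
  rw [EuclideanSpace.norm_eq, Real.sq_sqrt]
  positivity


/-- Theorem (A construction of multiplicative frames, part b):
If `z₁, …, z_K ∈ ℂⁿ \ {0}` is a frame for `ℂⁿ` with lower frame bound `A_K` and
upper frame bound `B_K`, `y₁, …, y_N ∈ ℂⁿ \ {0}`, and some `y_{j₀}` has all
coordinates of modulus at least `m_y > 0`, then the pointwise products
`X j k = y j ⊙ z k` satisfy, for every `x ∈ ℂⁿ`,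
`m_y² A_K ‖x‖² ≤ Σ_{j,k} |⟨x, X j k⟩|² ≤ N B_K (max_j ‖y j‖_∞²) ‖x‖²`;
in particular `X` is a (multiplicative) frame, i.e. it spans `ℂⁿ`. -/
theorem multiplicative_frame_construction_b
    (n N K : ℕ) (hn : 0 < n) (hN : 0 < N) (hK : 0 < K)
    (y : Fin N → EuclideanSpace ℂ (Fin n))
    (z : Fin K → EuclideanSpace ℂ (Fin n))
    (hy0 : ∀ j, y j ≠ 0) (hz0 : ∀ k, z k ≠ 0)
    (AK BK : ℝ) (hAK : 0 < AK) (hBK : 0 < BK)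
    (hframe : ∀ x : EuclideanSpace ℂ (Fin n),
      AK * ‖x‖ ^ 2 ≤ ∑ k, ‖(inner ℂ x (z k) : ℂ)‖ ^ 2 ∧
      ∑ k, ‖(inner ℂ x (z k) : ℂ)‖ ^ 2 ≤ BK * ‖x‖ ^ 2)
    (j₀ : Fin N) (my : ℝ) (hmy : my = ⨅ i : Fin n, ‖y j₀ i‖) (hmypos : 0 < my)
    (X : Fin N → Fin K → EuclideanSpace ℂ (Fin n))
    (hX : ∀ j k i, X j k i = y j i * z k i) :
    (∀ x : EuclideanSpace ℂ (Fin n),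
      my ^ 2 * AK * ‖x‖ ^ 2 ≤ ∑ j, ∑ k, ‖(inner ℂ x (X j k) : ℂ)‖ ^ 2 ∧
      ∑ j, ∑ k, ‖(inner ℂ x (X j k) : ℂ)‖ ^ 2 ≤
        (N : ℝ) * BK * (⨆ j : Fin N, (⨆ i : Fin n, ‖y j i‖) ^ 2) * ‖x‖ ^ 2) ∧
    Submodule.span ℂ (Set.range fun p : Fin N × Fin K => X p.1 p.2) = ⊤ := by
  haveI : Nonempty (Fin n) := ⟨⟨0, hn⟩⟩
  -- w j : the "twisted" vector
  set w : EuclideanSpace ℂ (Fin n) → Fin N → EuclideanSpace ℂ (Fin n) :=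
    fun x j => WithLp.toLp 2 (fun i => x i * (starRingEnd ℂ) (y j i)) with hw
  have hinner : ∀ (x : EuclideanSpace ℂ (Fin n)) j k,
      (inner ℂ x (X j k) : ℂ) = inner ℂ (w x j) (z k) := by
    intro x j k
    simp only [PiLp.inner_apply, hX, hw, PiLp.toLp_apply, RCLike.inner_apply, map_mul,
      RingHomCompTriple.comp_apply, RingHom.id_apply]
    refine Finset.sum_congr rfl fun i _ => ?_
    simp [mul_comm, mul_assoc, mul_left_comm]
  have hwnorm : ∀ (x : EuclideanSpace ℂ (Fin n)) j,
      ‖w x j‖ ^ 2 = ∑ i, ‖x i‖ ^ 2 * ‖y j i‖ ^ 2 := by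
    intro x j
    rw [euc_norm_sq]
    refine Finset.sum_congr rfl fun i _ => ?_
    simp [hw, mul_pow]
  have hmain : ∀ x : EuclideanSpace ℂ (Fin n),
      my ^ 2 * AK * ‖x‖ ^ 2 ≤ ∑ j, ∑ k, ‖(inner ℂ x (X j k) : ℂ)‖ ^ 2 ∧
      ∑ j, ∑ k, ‖(inner ℂ x (X j k) : ℂ)‖ ^ 2 ≤
        (N : ℝ) * BK * (⨆ j : Fin N, (⨆ i : Fin n, ‖y j i‖) ^ 2) * ‖x‖ ^ 2 := by
    intro x
    constructor
    · calc my ^ 2 * AK * ‖x‖ ^ 2 ≤ AK * ‖w x j₀‖ ^ 2 := by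
            rw [hwnorm, euc_norm_sq, Finset.mul_sum, Finset.mul_sum]
            ring_nf
            refine Finset.sum_le_sum fun i _ => ?_
            have hle : my ≤ ‖y j₀ i‖ := by
              rw [hmy]
              exact ciInf_le (Set.Finite.bddBelow (Set.finite_range _)) i
            nlinarith [mul_le_mul_of_nonneg_left
              (pow_le_pow_left₀ hmypos.le hle 2)
              (by positivity : (0:ℝ) ≤ AK * ‖x i‖ ^ 2)]
          _ ≤ ∑ k, ‖(inner ℂ (w x j₀) (z k) : ℂ)‖ ^ 2 := (hframe _).1
          _ = ∑ k, ‖(inner ℂ x (X j₀ k) : ℂ)‖ ^ 2 := by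
            refine Finset.sum_congr rfl fun k _ => ?_; rw [hinner]
          _ ≤ ∑ j, ∑ k, ‖(inner ℂ x (X j k) : ℂ)‖ ^ 2 := by
            refine Finset.single_le_sum (f := fun j => ∑ k, ‖(inner ℂ x (X j k) : ℂ)‖ ^ 2) (fun j _ => ?_) (Finset.mem_univ j₀)
            positivity
    · have hS0 : (0:ℝ) ≤ ⨆ j : Fin N, (⨆ i : Fin n, ‖y j i‖) ^ 2 := by
        haveI : Nonempty (Fin N) := ⟨j₀⟩
        refine le_ciSup_of_le (Set.Finite.bddAbove (Set.finite_range _)) j₀ ?_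
        positivity
      calc ∑ j, ∑ k, ‖(inner ℂ x (X j k) : ℂ)‖ ^ 2
          = ∑ j, ∑ k, ‖(inner ℂ (w x j) (z k) : ℂ)‖ ^ 2 := by
            refine Finset.sum_congr rfl fun j _ => Finset.sum_congr rfl fun k _ => ?_
            rw [hinner]
        _ ≤ ∑ j : Fin N, BK * ((⨆ j : Fin N, (⨆ i : Fin n, ‖y j i‖) ^ 2) * ‖x‖ ^ 2) := by
            refine Finset.sum_le_sum fun j _ => le_trans (hframe _).2 ?_
            refine mul_le_mul_of_nonneg_left ?_ hBK.le
            rw [hwnorm, euc_norm_sq, Finset.mul_sum]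
            refine Finset.sum_le_sum fun i _ => ?_
            rw [mul_comm ((⨆ j : Fin N, (⨆ i : Fin n, ‖y j i‖) ^ 2)) _]
            refine mul_le_mul_of_nonneg_left ?_ (by positivity)
            refine le_trans ?_ (le_ciSup (Set.Finite.bddAbove (Set.finite_range _)) j)
            refine pow_le_pow_left₀ (norm_nonneg _) ?_ 2
            exact le_ciSup (f := fun i => ‖y j i‖) (Set.Finite.bddAbove (Set.finite_range _)) i
        _ = (N : ℝ) * BK * (⨆ j : Fin N, (⨆ i : Fin n, ‖y j i‖) ^ 2) * ‖x‖ ^ 2 := by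
            rw [Finset.sum_const, Finset.card_univ, Fintype.card_fin]; ring
  refine ⟨hmain, ?_⟩
  rw [← Submodule.orthogonal_eq_bot_iff]
  rw [Submodule.eq_bot_iff]
  intro x hx
  have hzero : ∀ j k, (inner ℂ x (X j k) : ℂ) = 0 := by
    intro j k
    have := (Submodule.mem_orthogonal _ x).1 hx (X j k)
      (Submodule.subset_span ⟨(j, k), rfl⟩)
    rw [← inner_conj_symm, this, map_zero]
  have h1 := (hmain x).1
  have h2 : ∑ j, ∑ k, ‖(inner ℂ x (X j k) : ℂ)‖ ^ 2 = 0 := by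
    simp [hzero]
  rw [h2] at h1
  have hx2 : ‖x‖ ^ 2 ≤ 0 := by nlinarith [mul_pos (pow_pos hmypos 2) hAK]
  have : ‖x‖ = 0 := by nlinarith [norm_nonneg x, sq_nonneg ‖x‖]
  exact norm_eq_zero.mp this
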